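/- Consider functions κ : {1,2,3,4} → {0,1,2,3,4} with the equivalence κ ~ κ' iff κ' = σ̃ ∘ κ ∘ τ̂ for some permutations σ, τ of {1,2,3}. The set of functions that never take the value 0 is a union of equivalence classes; it contains exactly 4⁴ = 256 functions and splits into exactly 20 equivalence classes. -/

import Mathlib

/-- The identification of `{1,2,3}` (modelled by `Fin 3`) with the subset `{1,2,3}`
of `{0,1,2,3,4}` (modelled by `Fin 5`), sending `i` to `i + 1`. -/
def embFive : Fin 3 ≃ {j : Fin 5 // 1 ≤ j.val ∧ j.val ≤ 3} where
  toFun i := ⟨⟨i.val + 1, by have := i.isLt; omega⟩,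
    (by have := i.isLt; omega : 1 ≤ i.val + 1 ∧ i.val + 1 ≤ 3)⟩
  invFun j := ⟨j.val.val - 1, by have := j.property; omega⟩
  left_inv i := by apply Fin.ext; simp
  right_inv j := by
    apply Subtype.ext; apply Fin.ext
    have := j.property; simp; omega

/-- The identification of `{1,2,3}` (modelled by `Fin 3`) with the subset of indices
`{1,2,3}` of the index set `{1,2,3,4}` (modelled by `Fin 4`, where the index `4` is the
last element of `Fin 4`). -/
def embFour : Fin 3 ≃ {j : Fin 4 // j.val ≤ 2} where
  toFun i := ⟨⟨i.val, by have := i.isLt; omega⟩, (by have := i.isLt; omega : i.val ≤ 2)⟩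
  invFun j := ⟨j.val.val, by have := j.property; omega⟩
  left_inv i := Fin.ext rfl
  right_inv j := Subtype.ext (Fin.ext rfl)

/-- `σ̃`: the permutation of `{0,1,2,3,4}` fixing `0` and `4` and agreeing with `σ` on
`{1,2,3}`. -/
def tilde (σ : Equiv.Perm (Fin 3)) : Equiv.Perm (Fin 5) :=
  σ.extendDomain embFive

/-- `τ̂`: the permutation of the index set `{1,2,3,4}` fixing `4` and agreeing with `τ` on
`{1,2,3}`. -/
def hat (τ : Equiv.Perm (Fin 3)) : Equiv.Perm (Fin 4) :=
  τ.extendDomain embFour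

/-- Two punctured quartets `κ, κ' : {1,2,3,4} → {0,1,2,3,4}` are equivalent iff
`κ' = σ̃ ∘ κ ∘ τ̂` for some permutations `σ, τ` of `{1,2,3}`. -/
def pRel (κ κ' : Fin 4 → Fin 5) : Prop :=
  ∃ σ τ : Equiv.Perm (Fin 3), κ' = ⇑(tilde σ) ∘ κ ∘ ⇑(hat τ)


/-! ### Auxiliary machinery -/

/-- The six permutations of `Fin 3` as explicit tables. -/
def permTab : Fin 6 → Fin 3 → Fin 3 :=
  ![![0,1,2], ![0,2,1], ![1,0,2], ![1,2,0], ![2,0,1], ![2,1,0]]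

/-- Inverse tables. -/
def permTabInv : Fin 6 → Fin 3 → Fin 3 :=
  ![![0,1,2], ![0,2,1], ![1,0,2], ![2,0,1], ![1,2,0], ![2,1,0]]

lemma permTab_left : ∀ p : Fin 6, Function.LeftInverse (permTabInv p) (permTab p) := by
  decide

lemma permTab_right : ∀ p : Fin 6, Function.RightInverse (permTabInv p) (permTab p) := by
  decide

/-- The six permutations of `Fin 3` as `Equiv.Perm`s. -/
def permOf (p : Fin 6) : Equiv.Perm (Fin 3) :=
  ⟨permTab p, permTabInv p, permTab_left p, permTab_right p⟩

lemma permOf_cover : ∀ σ : Equiv.Perm (Fin 3), ∃ p : Fin 6, σ = permOf p := by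
  decide

/-- Explicit tables for `tilde (permOf p)`. -/
def Tt : Fin 6 → Fin 5 → Fin 5 :=
  ![![0,1,2,3,4], ![0,1,3,2,4], ![0,2,1,3,4], ![0,2,3,1,4], ![0,3,1,2,4], ![0,3,2,1,4]]

/-- Explicit tables for `hat (permOf q)`. -/
def Ht : Fin 6 → Fin 4 → Fin 4 :=
  ![![0,1,2,3], ![0,2,1,3], ![1,0,2,3], ![1,2,0,3], ![2,0,1,3], ![2,1,0,3]]

lemma tilde_permOf_apply : ∀ p : Fin 6, ∀ j : Fin 5, tilde (permOf p) j = Tt p j := by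
  decide

lemma hat_permOf_apply : ∀ q : Fin 6, ∀ i : Fin 4, hat (permOf q) i = Ht q i := by
  decide

lemma tilde_permOf (p : Fin 6) : ⇑(tilde (permOf p)) = Tt p :=
  funext (tilde_permOf_apply p)

lemma hat_permOf (q : Fin 6) : ⇑(hat (permOf q)) = Ht q :=
  funext (hat_permOf_apply q)

/-- A computation-friendly version of `pRel`. -/
def relC (κ κ' : Fin 4 → Fin 5) : Prop :=
  ∃ p q : Fin 6, ∀ i, κ' i = Tt p (κ (Ht q i))

instance : DecidableEq (Fin 4 → Fin 5) := inferInstance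

instance (κ κ' : Fin 4 → Fin 5) : Decidable (relC κ κ') := by
  unfold relC; infer_instance

lemma pRel_iff_relC (κ κ' : Fin 4 → Fin 5) : pRel κ κ' ↔ relC κ κ' := by
  constructor
  · rintro ⟨σ, τ, rfl⟩
    obtain ⟨p, rfl⟩ := permOf_cover σ
    obtain ⟨q, rfl⟩ := permOf_cover τ
    exact ⟨p, q, fun i => by simp [tilde_permOf, hat_permOf, Function.comp]⟩
  · rintro ⟨p, q, h⟩
    exact ⟨permOf p, permOf q, funext fun i => by
      simp [tilde_permOf, hat_permOf, Function.comp, h i]⟩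

lemma pRel_equivalence : Equivalence pRel := by
  constructor
  · intro κ
    exact ⟨1, 1, by simp [tilde, hat]⟩
  · rintro κ κ' ⟨σ, τ, rfl⟩
    refine ⟨σ⁻¹, τ⁻¹, funext fun i => ?_⟩
    simp [tilde, hat, ← Equiv.Perm.extendDomain_inv, ← Equiv.Perm.extendDomain_symm, Function.comp]
  · rintro κ κ' κ'' ⟨σ, τ, rfl⟩ ⟨σ', τ', rfl⟩
    refine ⟨σ' * σ, τ * τ', funext fun i => ?_⟩
    simp [tilde, hat, ← Equiv.Perm.extendDomain_mul, Function.comp]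

lemma Tt_ne_zero : ∀ p : Fin 6, ∀ j : Fin 5, j ≠ 0 → Tt p j ≠ 0 := by decide

lemma pRel_nonzero {κ κ' : Fin 4 → Fin 5} (h : pRel κ κ')
    (h0 : ∀ i, κ i ≠ 0) : ∀ i, κ' i ≠ 0 := by
  rw [pRel_iff_relC] at h
  obtain ⟨p, q, h⟩ := h
  intro i
  rw [h i]
  exact Tt_ne_zero p _ (h0 _)

/-- The 20 orbit representatives. -/
def rep : Fin 20 → Fin 4 → Fin 5 :=
  ![![1,1,1,1], ![1,1,1,2], ![1,1,1,4], ![1,1,2,1], ![1,1,2,2], ![1,1,2,3], ![1,1,2,4],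
    ![1,1,4,1], ![1,1,4,2], ![1,1,4,4], ![1,2,3,1], ![1,2,3,4], ![1,2,4,1], ![1,2,4,3],
    ![1,2,4,4], ![1,4,4,1], ![1,4,4,2], ![1,4,4,4], ![4,4,4,1], ![4,4,4,4]]

lemma rep_ne_zero : ∀ p : Fin 20, ∀ i, rep p i ≠ 0 := by decide

/-! ### Fast `Nat`-encoded computations -/

/-- Rows of `Tt`, base-5 encoded. -/
def ttT : Nat → Nat
  | 0 => 2930 | 1 => 2830 | 2 => 2910 | 3 => 2710 | 4 => 2790 | _ => 2690

/-- Rows of `Ht`, base-5 encoded. -/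
def htT : Nat → Nat
  | 0 => 430 | 1 => 410 | 2 => 426 | 3 => 386 | 4 => 402 | _ => 382

def ttN (p j : Nat) : Nat := ttT p / 5 ^ j % 5

def htN (q i : Nat) : Nat := htT q / 5 ^ i % 5

/-- The representatives, base-5 encoded. -/
def repT : Nat → Nat
  | 0 => 156 | 1 => 281 | 2 => 531 | 3 => 181 | 4 => 306
  | 5 => 431 | 6 => 556 | 7 => 231 | 8 => 356 | 9 => 606
  | 10 => 211 | 11 => 586 | 12 => 236 | 13 => 486 | 14 => 611
  | 15 => 246 | 16 => 371 | 17 => 621 | 18 => 249 | _ => 624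

/-- Fast boolean version of `relC` on base-5 encoded quartets. -/
def relB (k k' : Nat) : Bool :=
  (List.range 6).any fun p => (List.range 6).any fun q =>
    (List.range 4).all fun i => k' / 5 ^ i % 5 == ttN p (k / 5 ^ htN q i % 5)

/-- Base-5 encoding of a quartet. -/
def encode (κ : Fin 4 → Fin 5) : Nat :=
  (κ 0).val + 5 * (κ 1).val + 25 * (κ 2).val + 125 * (κ 3).val

lemma encode_digit (κ : Fin 4 → Fin 5) (i : Fin 4) :
    encode κ / 5 ^ i.val % 5 = (κ i).val := by
  have h0 := (κ 0).isLt
  have h1 := (κ 1).isLt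
  have h2 := (κ 2).isLt
  have h3 := (κ 3).isLt
  fin_cases i <;> simp [encode] <;> omega

lemma encode_lt (κ : Fin 4 → Fin 5) : encode κ < 625 := by
  have h0 := (κ 0).isLt
  have h1 := (κ 1).isLt
  have h2 := (κ 2).isLt
  have h3 := (κ 3).isLt
  simp [encode]; omega

lemma ttN_eq : ∀ p : Fin 6, ∀ j : Fin 5, ttN p.val j.val = (Tt p j).val := by decide

lemma htN_eq : ∀ q : Fin 6, ∀ i : Fin 4, htN q.val i.val = (Ht q i).val := by decide

lemma repT_eq : ∀ t : Fin 20, repT t.val = encode (rep t) := by decide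

lemma relB_iff (κ κ' : Fin 4 → Fin 5) :
    relC κ κ' ↔ relB (encode κ) (encode κ') = true := by
  simp only [relB, List.any_eq_true, List.all_eq_true, List.mem_range, beq_iff_eq]
  constructor
  · rintro ⟨p, q, h⟩
    refine ⟨p.val, p.isLt, q.val, q.isLt, fun i hi => ?_⟩
    have hd := encode_digit κ' ⟨i, hi⟩
    rw [show (⟨i, hi⟩ : Fin 4).val = i from rfl] at hd
    rw [hd, htN_eq q ⟨i, hi⟩, encode_digit κ (Ht q ⟨i, hi⟩), h ⟨i, hi⟩, ttN_eq]
  · rintro ⟨p, hp, q, hq, h⟩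
    refine ⟨⟨p, hp⟩, ⟨q, hq⟩, fun i => ?_⟩
    have := h i.val i.isLt
    rw [encode_digit κ' i, htN_eq ⟨q, hq⟩ i, encode_digit κ (Ht ⟨q, hq⟩ i),
      ttN_eq ⟨p, hp⟩] at this
    exact Fin.ext this

set_option maxRecDepth 100000 in
set_option maxHeartbeats 4000000 in
lemma rep_coverB : ∀ m ∈ List.range 625,
    (m / 1 % 5 == 0 || m / 5 % 5 == 0 || m / 25 % 5 == 0 || m / 125 % 5 == 0
      || (List.range 20).any fun t => relB m (repT t)) = true := by decide

set_option maxHeartbeats 4000000 in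
lemma rep_pairwiseB : ∀ t t' : Fin 20, relB (repT t.val) (repT t'.val) = true → t = t' := by
  decide

lemma rep_cover (κ : Fin 4 → Fin 5) (h0 : ∀ i, κ i ≠ 0) :
    ∃ t : Fin 20, relC κ (rep t) := by
  have hm := rep_coverB (encode κ) (List.mem_range.mpr (encode_lt κ))
  simp only [Bool.or_eq_true, beq_iff_eq, List.any_eq_true, List.mem_range] at hm
  have hz : ∀ i : Fin 4, ¬ (encode κ / 5 ^ i.val % 5 = 0) := by
    intro i h
    rw [encode_digit κ i] at h
    exact h0 i (Fin.ext h)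
  rcases hm with ((((h | h) | h) | h) | ⟨t, ht, h⟩)
  · exact absurd (by simpa using h) (hz 0)
  · exact absurd (by simpa using h) (hz 1)
  · exact absurd (by simpa using h) (hz 2)
  · exact absurd (by simpa using h) (hz 3)
  · refine ⟨⟨t, ht⟩, ?_⟩
    rw [relB_iff, ← repT_eq ⟨t, ht⟩]
    exact h

lemma rep_pairwise (t t' : Fin 20) (h : relC (rep t) (rep t')) : t = t' := by
  apply rep_pairwiseB
  rw [repT_eq, repT_eq, ← relB_iff]
  exact h

lemma fn_eta (κ : Fin 4 → Fin 5) : κ = ![κ 0, κ 1, κ 2, κ 3] := by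
  funext i
  fin_cases i <;> rfl

/-- The set of punctured quartets `κ : {1,2,3,4} → {0,1,2,3,4}` that never take the
value `0` is a union of equivalence classes of `pRel`; it contains exactly `4⁴ = 256`
functions and splits into exactly `20` equivalence classes (`S₃ × S₃`-orbits). -/
theorem twenty_orbits_without_zero :
    (∀ κ κ' : Fin 4 → Fin 5, pRel κ κ' → ((∀ i, κ i ≠ 0) ↔ (∀ i, κ' i ≠ 0))) ∧
    Nat.card {κ : Fin 4 → Fin 5 // ∀ i, κ i ≠ 0} = 256 ∧
    Nat.card (Quot (fun κ κ' : {κ : Fin 4 → Fin 5 // ∀ i, κ i ≠ 0} => pRel κ.val κ'.val))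
      = 20 := by
  classical
  set r : {κ : Fin 4 → Fin 5 // ∀ i, κ i ≠ 0} → {κ : Fin 4 → Fin 5 // ∀ i, κ i ≠ 0} → Prop :=
    fun κ κ' => pRel κ.val κ'.val with hr
  refine ⟨?_, ?_, ?_⟩
  · intro κ κ' h
    exact ⟨fun h0 => pRel_nonzero h h0,
      fun h0 => pRel_nonzero (pRel_equivalence.symm h) h0⟩
  · rw [Nat.card_congr (Equiv.subtypePiEquivPi (p := fun _ (b : Fin 5) => b ≠ 0))]
    rw [Nat.card_pi]
    simp [Nat.card_eq_fintype_card]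
  · have hrequiv : Equivalence r := by
      constructor
      · exact fun a => pRel_equivalence.refl a.val
      · exact fun h => pRel_equivalence.symm h
      · exact fun h h' => pRel_equivalence.trans h h'
    set repS : Fin 20 → {κ : Fin 4 → Fin 5 // ∀ i, κ i ≠ 0} :=
      fun p => ⟨rep p, rep_ne_zero p⟩ with hrepS
    have hcov : ∀ κ : {κ : Fin 4 → Fin 5 // ∀ i, κ i ≠ 0}, ∃ p : Fin 20, r κ (repS p) := by
      intro ⟨κ, h0⟩
      obtain ⟨p, hp⟩ := rep_cover κ h0
      exact ⟨p, (pRel_iff_relC _ _).mpr hp⟩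
    have hbij : Function.Bijective (fun p : Fin 20 =>
        Quot.mk r (repS p)) := by
      constructor
      · intro p p' h
        rw [Quot.eq] at h
        replace h := (hrequiv.eqvGen_iff).mp h
        exact rep_pairwise p p' ((pRel_iff_relC _ _).mp h)
      · intro q
        induction q using Quot.ind with
        | _ κ =>
          obtain ⟨p, hp⟩ := hcov κ
          exact ⟨p, (Quot.sound (hrequiv.symm hp))⟩
    exact Nat.card_eq_of_equiv_fin (Equiv.ofBijective _ hbij).symm
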